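/- arXiv:1303.2729 — 4 statements merged into one kernel-verified Lean document; each statement's English description precedes it below -/
import Mathlib

section
/- If A is a multiplicative subgroup of Z_p^* (p prime) with |A| > p^{3/4}, then the sumset 2A = {a+b : a,b in A} contains all of Z_p^*. -/
open Finset Pointwise AddChar Complex

/-- `A` is (the underlying set of) a multiplicative subgroup of `ℤ_p^*`. -/
def mulSubgroup (p : ℕ) (A : Finset (ZMod p)) : Prop :=
  (0 : ZMod p) ∉ A ∧ (1 : ZMod p) ∈ A ∧
    (∀ x ∈ A, ∀ y ∈ A, x * y ∈ A) ∧ ∀ x ∈ A, x⁻¹ ∈ A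

namespace Stmt0Aux

variable (p : ℕ) [NeZero p] (A : Finset (ZMod p))

/-- The exponential sum over `A`. -/
noncomputable def S (l : ZMod p) : ℂ := ∑ a ∈ A, ZMod.stdAddChar (l * a)

/-- Number of representations of `x` as a sum of two elements of `A`. -/
def r (x : ZMod p) : ℕ := ((A ×ˢ A).filter (fun ab => ab.1 + ab.2 = x)).card

lemma orth (t : ZMod p) :
    ∑ i : ZMod p, ZMod.stdAddChar (t * i) = if t = 0 then (p : ℂ) else 0 := by
  split_ifs with h
  · simp only [h, zero_mul, map_zero_eq_one, sum_const, card_univ, ZMod.card,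
      nsmul_eq_mul, mul_one]
  · exact sum_eq_zero_of_ne_one (ZMod.isPrimitive_stdAddChar p h)

lemma conj_std (x : ZMod p) :
    (starRingEnd ℂ) (ZMod.stdAddChar x) = ZMod.stdAddChar (-x) := by
  rw [AddChar.map_neg_eq_inv, Complex.inv_eq_conj]
  rw [ZMod.stdAddChar_apply]; exact Circle.norm_coe _

lemma S_zero : S p A 0 = (A.card : ℂ) := by
  simp [S]

lemma conj_S (l : ZMod p) :
    (starRingEnd ℂ) (S p A l) = ∑ a ∈ A, ZMod.stdAddChar (-(l * a)) := by
  rw [S, map_sum]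
  exact Finset.sum_congr rfl fun a _ => conj_std p _

/-- Parseval. -/
lemma parseval : ∑ l : ZMod p, (Complex.normSq (S p A l) : ℂ) = (p : ℂ) * A.card := by
  have h1 : ∀ l : ZMod p, (Complex.normSq (S p A l) : ℂ)
      = ∑ a ∈ A, ∑ b ∈ A, ZMod.stdAddChar ((b - a) * l) := by
    intro l
    rw [Complex.normSq_eq_conj_mul_self, conj_S, S, Finset.sum_mul_sum]
    refine Finset.sum_congr rfl fun a _ => Finset.sum_congr rfl fun b _ => ?_
    rw [← AddChar.map_add_eq_mul]
    congr 1
    ring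
  simp only [h1]
  rw [Finset.sum_comm]
  have h2 : ∀ a ∈ A, ∑ l : ZMod p, ∑ b ∈ A, ZMod.stdAddChar ((b - a) * l)
      = (p : ℂ) := by
    intro a ha
    rw [Finset.sum_comm]
    have h3 : ∀ b ∈ A, ∑ l : ZMod p, ZMod.stdAddChar ((b - a) * l)
        = if b = a then (p : ℂ) else 0 := by
      intro b _
      rw [orth]
      simp [sub_eq_zero]
    rw [Finset.sum_congr rfl h3, Finset.sum_ite_eq' A a (fun _ => (p : ℂ)), if_pos ha]
  rw [Finset.sum_congr rfl h2, Finset.sum_const, nsmul_eq_mul, mul_comm]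

/-- The square of the exponential sum as a sum over pairs. -/
lemma S_sq (l : ZMod p) :
    (S p A l) ^ 2 = ∑ u ∈ A ×ˢ A, ZMod.stdAddChar (l * (u.1 + u.2)) := by
  rw [sq, S, Finset.sum_mul_sum, Finset.sum_product]
  refine Finset.sum_congr rfl fun a _ => Finset.sum_congr rfl fun b _ => ?_
  rw [← AddChar.map_add_eq_mul]
  congr 1
  ring

/-- Energy identity. -/
lemma energy : ∑ l : ZMod p, (Complex.normSq (S p A l) : ℂ) ^ 2
    = (p : ℂ) * ∑ u ∈ A ×ˢ A, ∑ v ∈ A ×ˢ A,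
        (if v.1 + v.2 = u.1 + u.2 then (1 : ℂ) else 0) := by
  have h1 : ∀ l : ZMod p, (Complex.normSq (S p A l) : ℂ) ^ 2
      = ∑ u ∈ A ×ˢ A, ∑ v ∈ A ×ˢ A,
          ZMod.stdAddChar ((v.1 + v.2 - (u.1 + u.2)) * l) := by
    intro l
    have : (Complex.normSq (S p A l) : ℂ) ^ 2 = (Complex.normSq ((S p A l) ^ 2) : ℂ) := by
      rw [map_pow]; push_cast; ring
    rw [this, Complex.normSq_eq_conj_mul_self, S_sq, map_sum, Finset.sum_mul_sum]
    refine Finset.sum_congr rfl fun u _ => Finset.sum_congr rfl fun v _ => ?_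
    rw [conj_std, ← AddChar.map_add_eq_mul]
    congr 1
    ring
  simp only [h1]
  rw [Finset.sum_comm]
  rw [Finset.mul_sum]
  refine Finset.sum_congr rfl fun u _ => ?_
  rw [Finset.sum_comm, Finset.mul_sum]
  refine Finset.sum_congr rfl fun v _ => ?_
  rw [orth]
  simp [sub_eq_zero]

/-- Counting identity. -/
lemma counting : ∑ u ∈ A ×ˢ A, ∑ v ∈ A ×ˢ A,
      (if v.1 + v.2 = u.1 + u.2 then (1 : ℕ) else 0)
    = ∑ x : ZMod p, (r p A x) ^ 2 := by
  have h1 : ∀ u : ZMod p × ZMod p, ∑ v ∈ A ×ˢ A,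
      (if v.1 + v.2 = u.1 + u.2 then (1 : ℕ) else 0) = r p A (u.1 + u.2) := by
    intro u
    rw [r, Finset.card_filter]
  simp only [h1]
  rw [← Finset.sum_fiberwise_of_maps_to (g := fun u : ZMod p × ZMod p => u.1 + u.2)
    (t := (Finset.univ : Finset (ZMod p))) (fun u _ => Finset.mem_univ _)]
  refine Finset.sum_congr rfl fun x _ => ?_
  have h2 : ∀ u ∈ (A ×ˢ A).filter (fun u : ZMod p × ZMod p => u.1 + u.2 = x),
      r p A (u.1 + u.2) = r p A x := by
    intro u hu
    rw [(Finset.mem_filter.mp hu).2]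
  rw [Finset.sum_congr rfl h2, Finset.sum_const, smul_eq_mul, sq]
  rfl

/-- Sum of representation numbers. -/
lemma r_total : ∑ x : ZMod p, r p A x = A.card ^ 2 := by
  rw [sq, ← Finset.card_product A A]
  exact (Finset.card_eq_sum_card_fiberwise (fun u _ => Finset.mem_univ (u.1 + u.2))).symm

lemma S_invar [Fact p.Prime] (hA : mulSubgroup p A) {a : ZMod p} (ha : a ∈ A)
    (l : ZMod p) : S p A (l * a) = S p A l := by
  obtain ⟨h0A, h1A, hmul, hinv⟩ := hA
  have ha0 : a ≠ 0 := fun h => h0A (h ▸ ha)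
  rw [S, S]
  refine Finset.sum_nbij' (fun b => a * b) (fun c => a⁻¹ * c) ?_ ?_ ?_ ?_ ?_
  · intro b hb; exact hmul a ha b hb
  · intro c hc; exact hmul a⁻¹ (hinv a ha) c hc
  · intro b hb; exact inv_mul_cancel_left₀ ha0 b
  · intro c hc; exact mul_inv_cancel_left₀ ha0 c
  · intro b hb; rw [mul_assoc]

lemma r_invar [Fact p.Prime] (hA : mulSubgroup p A) {a : ZMod p} (ha : a ∈ A)
    (x : ZMod p) : r p A (x * a) = r p A x := by
  obtain ⟨h0A, h1A, hmul, hinv⟩ := hA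
  have ha0 : a ≠ 0 := fun h => h0A (h ▸ ha)
  rw [r, r]
  refine Finset.card_nbij' (fun u => (u.1 * a⁻¹, u.2 * a⁻¹)) (fun u => (u.1 * a, u.2 * a))
    ?_ ?_ ?_ ?_
  · rintro ⟨u1, u2⟩ hu
    simp only [Finset.mem_coe, Finset.mem_filter, Finset.mem_product] at hu ⊢
    refine ⟨⟨hmul u1 hu.1.1 a⁻¹ (hinv a ha), hmul u2 hu.1.2 a⁻¹ (hinv a ha)⟩, ?_⟩
    rw [← add_mul, hu.2, mul_assoc, mul_inv_cancel₀ ha0, mul_one]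
  · rintro ⟨u1, u2⟩ hu
    simp only [Finset.mem_coe, Finset.mem_filter, Finset.mem_product] at hu ⊢
    refine ⟨⟨hmul u1 hu.1.1 a ha, hmul u2 hu.1.2 a ha⟩, ?_⟩
    rw [← add_mul, hu.2]
  · rintro ⟨u1, u2⟩ _
    simp [mul_assoc, inv_mul_cancel₀ ha0]
  · rintro ⟨u1, u2⟩ _
    simp [mul_assoc, mul_inv_cancel₀ ha0]

lemma parsevalR : ∑ l : ZMod p, Complex.normSq (S p A l) = (p : ℝ) * A.card := by
  have h := parseval p A
  exact_mod_cast h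

lemma energyR : ∑ l : ZMod p, (Complex.normSq (S p A l)) ^ 2
    = (p : ℝ) * ∑ x : ZMod p, (r p A x : ℝ) ^ 2 := by
  have h := energy p A
  have hc : ∑ u ∈ A ×ˢ A, ∑ v ∈ A ×ˢ A, (if v.1 + v.2 = u.1 + u.2 then (1 : ℂ) else 0)
      = ((∑ x : ZMod p, (r p A x) ^ 2 : ℕ) : ℂ) := by
    rw [← counting p A]
    push_cast
    rfl
  rw [hc] at h
  exact_mod_cast h

end Stmt0Aux

theorem stmt0 (p : ℕ) (hp : p.Prime) (A : Finset (ZMod p))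
    (hA : mulSubgroup p A) (hlarge : (p : ℝ) ^ ((3 : ℝ) / 4) < A.card) :
    ∀ x : ZMod p, x ≠ 0 → x ∈ A + A := by
  intro x hx
  by_contra hxA
  haveI : Fact p.Prime := ⟨hp⟩
  haveI : NeZero p := ⟨hp.pos.ne'⟩
  open Stmt0Aux in
  obtain ⟨h0A, h1A, hmul, hinv⟩ := id hA
  -- basic cardinality facts
  have hn1 : 1 ≤ A.card := Finset.card_pos.mpr ⟨1, h1A⟩
  have hnp : A.card ≤ p - 1 := by
    have hsub : A ⊆ Finset.univ.erase (0 : ZMod p) := fun y hy =>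
      Finset.mem_erase.mpr ⟨fun h => h0A (h ▸ hy), Finset.mem_univ y⟩
    calc A.card ≤ (Finset.univ.erase (0 : ZMod p)).card := Finset.card_le_card hsub
      _ = p - 1 := by
        rw [Finset.card_erase_of_mem (Finset.mem_univ _), Finset.card_univ, ZMod.card]
  set N : ℝ := (A.card : ℝ) with hN
  have hNge1 : (1 : ℝ) ≤ N := by rw [hN]; exact_mod_cast hn1
  have hP2 : (2 : ℝ) ≤ (p : ℝ) := by exact_mod_cast hp.two_le
  have hNP : N ≤ (p : ℝ) - 1 := by
    have : (A.card : ℝ) ≤ ((p - 1 : ℕ) : ℝ) := by exact_mod_cast hnp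
    rwa [Nat.cast_sub hp.one_le, Nat.cast_one] at this
  have hPN0 : 0 ≤ (p : ℝ) - N := by linarith
  -- r vanishes on the coset of x
  have hr0 : Stmt0Aux.r p A x = 0 := by
    rw [Stmt0Aux.r, Finset.card_eq_zero, Finset.filter_eq_empty_iff]
    rintro ⟨a, b⟩ hab h
    rw [Finset.mem_product] at hab
    exact hxA (Finset.mem_add.mpr ⟨a, hab.1, b, hab.2, h⟩)
  set C : Finset (ZMod p) := A.image (fun a => x * a) with hC
  have hrC : ∀ y ∈ C, Stmt0Aux.r p A y = 0 := by
    intro y hy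
    obtain ⟨a, ha, rfl⟩ := Finset.mem_image.mp hy
    rw [Stmt0Aux.r_invar p A hA ha, hr0]
  have hCcard : C.card = A.card :=
    Finset.card_image_of_injective A (mul_right_injective₀ hx)
  set D : Finset (ZMod p) := Finset.univ \ C with hD
  have hDcard : D.card = p - A.card := by
    rw [hD, Finset.card_sdiff_of_subset (Finset.subset_univ C), Finset.card_univ, ZMod.card, hCcard]
  have hDcardR : (D.card : ℝ) = (p : ℝ) - N := by
    rw [hDcard, Nat.cast_sub (le_trans hnp (Nat.sub_le p 1))]
  have hDsum : ∑ y ∈ D, Stmt0Aux.r p A y = A.card ^ 2 := by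
    rw [Finset.sum_subset (Finset.subset_univ D) ?_, Stmt0Aux.r_total]
    intro y _ hyD
    refine hrC y ?_
    by_contra hyC
    exact hyD (Finset.mem_sdiff.mpr ⟨Finset.mem_univ y, hyC⟩)
  set E : ℝ := ∑ z : ZMod p, (Stmt0Aux.r p A z : ℝ) ^ 2 with hE
  have hE0 : 0 ≤ E := Finset.sum_nonneg fun z _ => sq_nonneg _
  -- Cauchy-Schwarz
  have hCS : N ^ 4 ≤ ((p : ℝ) - N) * E := by
    have h1 : (∑ y ∈ D, (Stmt0Aux.r p A y : ℝ)) ^ 2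
        ≤ D.card * ∑ y ∈ D, (Stmt0Aux.r p A y : ℝ) ^ 2 := sq_sum_le_card_mul_sum_sq
    have h2 : ∑ y ∈ D, (Stmt0Aux.r p A y : ℝ) = N ^ 2 := by
      rw [← Nat.cast_sum]
      rw [hDsum]
      push_cast [hN]
      ring
    have h3 : ∑ y ∈ D, (Stmt0Aux.r p A y : ℝ) ^ 2 ≤ E :=
      Finset.sum_le_sum_of_subset_of_nonneg (Finset.subset_univ D)
        (fun z _ _ => sq_nonneg _)
    calc N ^ 4 = (N ^ 2) ^ 2 := by ring
      _ ≤ D.card * ∑ y ∈ D, (Stmt0Aux.r p A y : ℝ) ^ 2 := by rw [← h2]; exact h1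
      _ ≤ ((p : ℝ) - N) * E := by
          rw [← hDcardR]
          exact mul_le_mul_of_nonneg_left h3 (Nat.cast_nonneg _)
  -- pointwise Fourier bound
  have hS0 : Complex.normSq (S p A 0) = N ^ 2 := by
    rw [Stmt0Aux.S_zero]
    rw [← Complex.ofReal_natCast, Complex.normSq_ofReal, hN]
    ring
  have hfb : ∀ l : ZMod p, l ≠ 0 → Complex.normSq (S p A l) ≤ (p : ℝ) - N := by
    intro l hl
    set B : Finset (ZMod p) := A.image (fun a => l * a) with hB
    have hBsum : ∑ m ∈ B, Complex.normSq (S p A m) = N * Complex.normSq (S p A l) := by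
      rw [hB, Finset.sum_image (fun a _ b _ h => mul_left_cancel₀ hl h)]
      have : ∀ a ∈ A, Complex.normSq (S p A (l * a)) = Complex.normSq (S p A l) := by
        intro a ha
        rw [Stmt0Aux.S_invar p A hA ha]
      rw [Finset.sum_congr rfl this, Finset.sum_const, nsmul_eq_mul, hN]
    have hBsub : B ⊆ Finset.univ.erase (0 : ZMod p) := by
      intro m hm
      obtain ⟨a, ha, rfl⟩ := Finset.mem_image.mp hm
      exact Finset.mem_erase.mpr
        ⟨mul_ne_zero hl (fun h0 => h0A (h0 ▸ ha)), Finset.mem_univ _⟩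
    have hErase : ∑ m ∈ Finset.univ.erase (0 : ZMod p), Complex.normSq (S p A m)
        = (p : ℝ) * N - N ^ 2 := by
      have := Finset.add_sum_erase Finset.univ (fun m => Complex.normSq (S p A m))
        (Finset.mem_univ (0 : ZMod p))
      rw [Stmt0Aux.parsevalR] at this
      rw [← hN] at this
      linarith [hS0, this]
    have hle : ∑ m ∈ B, Complex.normSq (S p A m)
        ≤ ∑ m ∈ Finset.univ.erase (0 : ZMod p), Complex.normSq (S p A m) :=
      Finset.sum_le_sum_of_subset_of_nonneg hBsub (fun z _ _ => Complex.normSq_nonneg _)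
    have hNpos : (0 : ℝ) < N := by linarith
    have key : N * Complex.normSq (S p A l) ≤ N * ((p : ℝ) - N) := by
      rw [← hBsum] at *
      nlinarith [hle, hErase]
    exact le_of_mul_le_mul_left key hNpos
  -- energy bound
  have hEb : (p : ℝ) * E ≤ N ^ 4 + ((p : ℝ) - N) * ((p : ℝ) * N - N ^ 2) := by
    rw [hE, ← Stmt0Aux.energyR]
    have hsplit : ∑ m : ZMod p, Complex.normSq (S p A m) ^ 2
        = Complex.normSq (S p A 0) ^ 2
          + ∑ m ∈ Finset.univ.erase (0 : ZMod p), Complex.normSq (S p A m) ^ 2 :=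
      (Finset.add_sum_erase _ _ (Finset.mem_univ 0)).symm
    rw [hsplit]
    have h4 : ∑ m ∈ Finset.univ.erase (0 : ZMod p), Complex.normSq (S p A m) ^ 2
        ≤ ((p : ℝ) - N) * ((p : ℝ) * N - N ^ 2) := by
      have hstep : ∀ m ∈ Finset.univ.erase (0 : ZMod p),
          Complex.normSq (S p A m) ^ 2 ≤ ((p : ℝ) - N) * Complex.normSq (S p A m) := by
        intro m hm
        have hm0 : m ≠ 0 := (Finset.mem_erase.mp hm).1
        have h5 := hfb m hm0
        nlinarith [Complex.normSq_nonneg (S p A m)]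
      calc ∑ m ∈ Finset.univ.erase (0 : ZMod p), Complex.normSq (S p A m) ^ 2
          ≤ ∑ m ∈ Finset.univ.erase (0 : ZMod p),
            ((p : ℝ) - N) * Complex.normSq (S p A m) := Finset.sum_le_sum hstep
        _ = ((p : ℝ) - N) * ((p : ℝ) * N - N ^ 2) := by
            rw [← Finset.mul_sum]
            congr 1
            have := Finset.add_sum_erase Finset.univ
              (fun m => Complex.normSq (S p A m)) (Finset.mem_univ (0 : ZMod p))
            rw [Stmt0Aux.parsevalR] at this
            rw [← hN] at this
            linarith [hS0]
    have h6 : Complex.normSq (S p A 0) ^ 2 = N ^ 4 := by rw [hS0]; ring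
    linarith [h4, h6]
  -- the power inequality
  have hpow : (p : ℝ) ^ 3 < N ^ 4 := by
    have h7 : ((p : ℝ) ^ ((3 : ℝ) / 4)) ^ (4 : ℕ) = (p : ℝ) ^ 3 := by
      rw [← Real.rpow_natCast ((p : ℝ) ^ ((3 : ℝ) / 4)) 4,
        ← Real.rpow_mul (Nat.cast_nonneg p), ← Real.rpow_natCast (p : ℝ) 3]
      norm_num
    calc (p : ℝ) ^ 3 = ((p : ℝ) ^ ((3 : ℝ) / 4)) ^ (4 : ℕ) := h7.symm
      _ < N ^ (4 : ℕ) := by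
          exact pow_lt_pow_left₀ hlarge (Real.rpow_nonneg (Nat.cast_nonneg p) _) (by norm_num)
  -- final contradiction
  have h8 : N ^ 4 ≤ ((p : ℝ) - N) ^ 3 := by
    have h9 : (p : ℝ) * (N ^ 4) ≤ (p : ℝ) * (((p : ℝ) - N) * E) :=
      mul_le_mul_of_nonneg_left hCS (by linarith)
    have h10 : ((p : ℝ) - N) * ((p : ℝ) * E)
        ≤ ((p : ℝ) - N) * (N ^ 4 + ((p : ℝ) - N) * ((p : ℝ) * N - N ^ 2)) :=
      mul_le_mul_of_nonneg_left hEb hPN0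
    nlinarith [h9, h10, hNge1]
  have h11 : ((p : ℝ) - N) ^ 3 ≤ (p : ℝ) ^ 3 :=
    pow_le_pow_left₀ hPN0 (by linarith) 3
  linarith [hpow, h8, h11]
end

section
/- Let A be a multiplicative subgroup of Z_p^* and k ≥ 1. If |A| > p^{1/2 + 1/(2k)}, then the k-fold sumset kA = {x_1+...+x_k : x_i ∈ A} contains all of Z_p^*. -/
open Finset Pointwise

namespace Stmt1Aux

open ZMod Complex


variable {p : ℕ} [NeZero p]

noncomputable def S (A : Finset (ZMod p)) (l : ZMod p) : ℂ :=
  ∑ a ∈ A, ZMod.stdAddChar (l * a)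

lemma norm_std (j : ZMod p) : ‖(ZMod.stdAddChar j : ℂ)‖ = 1 := by
  rw [ZMod.stdAddChar_apply]
  exact Circle.norm_coe _

lemma conj_std (j : ZMod p) :
    (starRingEnd ℂ) (ZMod.stdAddChar j) = ZMod.stdAddChar (-j) := by
  rw [ZMod.stdAddChar_apply, ZMod.stdAddChar_apply, ← Circle.coe_inv_eq_conj,
    ← AddChar.map_neg_eq_inv]

lemma sum_std (b : ZMod p) :
    ∑ x : ZMod p, (ZMod.stdAddChar (x * b) : ℂ) = if b = 0 then (p : ℂ) else 0 := by
  have := AddChar.sum_mulShift b (ZMod.isPrimitive_stdAddChar p)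
  simpa [ZMod.card p] using this

lemma S_zero (A : Finset (ZMod p)) : S A 0 = (A.card : ℂ) := by
  simp [S]

lemma parseval (A : Finset (ZMod p)) :
    ∑ l : ZMod p, ‖S A l‖ ^ 2 = (p : ℝ) * A.card := by
  have key : ∑ l : ZMod p, S A l * (starRingEnd ℂ) (S A l) = (p : ℂ) * A.card := by
    have : ∀ l : ZMod p, S A l * (starRingEnd ℂ) (S A l)
        = ∑ a ∈ A, ∑ b ∈ A, (ZMod.stdAddChar (l * (a - b)) : ℂ) := by
      intro l
      rw [S, map_sum, Finset.sum_mul_sum]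
      refine Finset.sum_congr rfl fun a _ => Finset.sum_congr rfl fun b _ => ?_
      rw [conj_std, ← AddChar.map_add_eq_mul]
      ring_nf
    simp_rw [this]
    rw [Finset.sum_comm]
    have : ∀ a ∈ A, ∑ l : ZMod p, ∑ b ∈ A, (ZMod.stdAddChar (l * (a - b)) : ℂ)
        = (p : ℂ) := by
      intro a ha
      rw [Finset.sum_comm]
      have : ∀ b ∈ A, ∑ l : ZMod p, (ZMod.stdAddChar (l * (a - b)) : ℂ)
          = if a - b = 0 then (p:ℂ) else 0 := fun b _ => sum_std _
      rw [Finset.sum_congr rfl this]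
      simp only [sub_eq_zero]
      rw [Finset.sum_ite_eq A a fun _ => (p:ℂ)]
      simp [ha]
    rw [Finset.sum_congr rfl this, Finset.sum_const, nsmul_eq_mul, mul_comm]
  have cast : (↑(∑ l : ZMod p, ‖S A l‖ ^ 2) : ℂ) = (p : ℂ) * A.card := by
    rw [← key]
    push_cast
    refine Finset.sum_congr rfl fun l _ => ?_
    rw [Complex.mul_conj]
    norm_cast
    rw [Complex.sq_norm]
  exact_mod_cast cast

lemma S_mul_right (hp : p.Prime) {A : Finset (ZMod p)} (hA : mulSubgroup p A)
    {a : ZMod p} (ha : a ∈ A) (l : ZMod p) : S A (l * a) = S A l := by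
  haveI := Fact.mk hp
  obtain ⟨h0, h1, hmul, hinv⟩ := hA
  have ha0 : a ≠ 0 := fun h => h0 (h ▸ ha)
  rw [S, S]
  refine Finset.sum_nbij' (fun b => a * b) (fun c => a⁻¹ * c) ?_ ?_ ?_ ?_ ?_
  · exact fun b hb => hmul a ha b hb
  · exact fun c hc => hmul _ (hinv a ha) c hc
  · intro b hb; field_simp
  · intro c hc; field_simp
  · intro b hb; ring_nf

lemma sq_S_le (hp : p.Prime) {A : Finset (ZMod p)} (hA : mulSubgroup p A)
    {l : ZMod p} (hl : l ≠ 0) :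
    (A.card : ℝ) * ‖S A l‖ ^ 2 ≤ (p : ℝ) * A.card - (A.card : ℝ) ^ 2 := by
  haveI := Fact.mk hp
  have h0 := hA.1
  calc (A.card : ℝ) * ‖S A l‖ ^ 2
      = ∑ a ∈ A, ‖S A (l * a)‖ ^ 2 := by
        rw [Finset.sum_congr rfl fun a ha => by rw [S_mul_right hp hA ha]]
        simp [mul_comm]
    _ = ∑ m ∈ A.image (fun a => l * a), ‖S A m‖ ^ 2 := by
        rw [Finset.sum_image]
        intro a _ b _ h
        exact mul_left_cancel₀ hl h
    _ ≤ ∑ m ∈ Finset.univ.erase (0 : ZMod p), ‖S A m‖ ^ 2 := by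
        refine Finset.sum_le_sum_of_subset_of_nonneg ?_ (fun _ _ _ => sq_nonneg _)
        intro m hm
        simp only [Finset.mem_image] at hm
        obtain ⟨a, ha, rfl⟩ := hm
        refine Finset.mem_erase.2 ⟨mul_ne_zero hl (fun h => h0 (h ▸ ha)), Finset.mem_univ _⟩
    _ = (∑ m : ZMod p, ‖S A m‖ ^ 2) - ‖S A 0‖ ^ 2 :=
        Finset.sum_erase_eq_sub (Finset.mem_univ 0)
    _ = (p : ℝ) * A.card - (A.card : ℝ) ^ 2 := by
        rw [parseval, S_zero]
        norm_num

lemma std_map_sum {ι : Type*} (s : Finset ι) (g : ι → ZMod p) :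
    (ZMod.stdAddChar (∑ i ∈ s, g i) : ℂ) = ∏ i ∈ s, (ZMod.stdAddChar (g i) : ℂ) := by
  induction s using Finset.cons_induction with
  | empty => simp
  | cons a s ha ih => rw [Finset.sum_cons, Finset.prod_cons, AddChar.map_add_eq_mul, ih]

lemma S_pow (k : ℕ) (A : Finset (ZMod p)) (l : ZMod p) :
    (S A l) ^ k = ∑ f ∈ Fintype.piFinset (fun _ : Fin k => A),
      (ZMod.stdAddChar (l * ∑ i, f i) : ℂ) := by
  have hpow : (S A l) ^ k = ∏ _i : Fin k, S A l := by
    rw [Finset.prod_const, Finset.card_univ, Fintype.card_fin]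
  rw [hpow, S, Finset.prod_univ_sum]
  refine Finset.sum_congr rfl fun f _ => ?_
  rw [Finset.mul_sum Finset.univ f l, std_map_sum Finset.univ (fun i => l * f i)]

lemma Q_eq_zero (k : ℕ) {A : Finset (ZMod p)} {x : ZMod p}
    (hno : ∀ b ∈ A, ∀ f : Fin k → ZMod p, (∀ i, f i ∈ A) → ∑ i, f i ≠ x * b) :
    ∑ l : ZMod p, (S A l) ^ k * (starRingEnd ℂ) (S A (x * l)) = 0 := by
  have expand : ∀ l : ZMod p, (S A l) ^ k * (starRingEnd ℂ) (S A (x * l))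
      = ∑ f ∈ Fintype.piFinset (fun _ : Fin k => A), ∑ b ∈ A,
          (ZMod.stdAddChar (l * (∑ i, f i - x * b)) : ℂ) := by
    intro l
    rw [S_pow, S, map_sum, Finset.sum_mul_sum]
    refine Finset.sum_congr rfl fun f _ => Finset.sum_congr rfl fun b _ => ?_
    rw [conj_std, ← AddChar.map_add_eq_mul]
    ring_nf
  simp_rw [expand]
  rw [Finset.sum_comm]
  refine Finset.sum_eq_zero fun f hf => ?_
  rw [Finset.sum_comm]
  refine Finset.sum_eq_zero fun b hb => ?_
  have hfa : ∀ i, f i ∈ A := by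
    intro i
    exact (Fintype.mem_piFinset.mp hf) i
  have hne : ∑ i, f i - x * b ≠ 0 := sub_ne_zero_of_ne (hno b hb f hfa)
  rw [sum_std]
  simp [hne]

end Stmt1Aux

open Stmt1Aux in
theorem stmt1 (p k : ℕ) (hp : p.Prime) (hk : 1 ≤ k) (A : Finset (ZMod p))
    (hA : mulSubgroup p A)
    (hlarge : (p : ℝ) ^ ((1 : ℝ) / 2 + 1 / (2 * (k : ℝ))) < A.card) :
    ∀ x : ZMod p, x ≠ 0 →
      ∃ f : Fin k → ZMod p, (∀ i, f i ∈ A) ∧ ∑ i, f i = x := by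
  haveI : Fact p.Prime := ⟨hp⟩
  haveI : NeZero p := ⟨hp.ne_zero⟩
  intro x hx
  by_contra hcon
  push_neg at hcon
  obtain ⟨h0, h1, hmul, hinv⟩ := hA
  set N : ℕ := A.card with hN
  have hN1 : 1 ≤ N := Finset.card_pos.mpr ⟨1, h1⟩
  have hNpos : (0 : ℝ) < N := by exact_mod_cast hN1
  have hppos : (0 : ℝ) < p := by exact_mod_cast hp.pos
  -- no representation on the whole coset x * A
  have hno : ∀ b ∈ A, ∀ f : Fin k → ZMod p, (∀ i, f i ∈ A) → ∑ i, f i ≠ x * b := by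
    intro b hb f hf hsum
    have hb0 : b ≠ 0 := fun h => h0 (h ▸ hb)
    refine hcon (fun i => f i * b⁻¹) (fun i => hmul _ (hf i) _ (hinv b hb)) ?_
    rw [← Finset.sum_mul, hsum]
    field_simp
  have hQ := Q_eq_zero (p := p) k hno
  -- split off the l = 0 term
  have hsplit : (S A 0) ^ k * (starRingEnd ℂ) (S A (x * 0))
      + ∑ l ∈ Finset.univ.erase (0 : ZMod p), (S A l) ^ k * (starRingEnd ℂ) (S A (x * l))
      = 0 := by
    exact (Finset.add_sum_erase Finset.univ
      (fun l : ZMod p => (S A l) ^ k * (starRingEnd ℂ) (S A (x * l)))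
      (Finset.mem_univ 0)).trans hQ
  have hT0 : (S A 0) ^ k * (starRingEnd ℂ) (S A (x * 0)) = (N : ℂ) ^ (k + 1) := by
    rw [mul_zero, S_zero, map_natCast]
    ring
  have hmain : ((N : ℝ)) ^ (k + 1)
      ≤ ∑ l ∈ Finset.univ.erase (0 : ZMod p), ‖S A l‖ ^ k * ‖S A (x * l)‖ := by
    have : (N : ℂ) ^ (k + 1)
        = -∑ l ∈ Finset.univ.erase (0 : ZMod p), (S A l) ^ k * (starRingEnd ℂ) (S A (x * l)) := by
      rw [← hT0]; linear_combination hsplit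
    calc ((N : ℝ)) ^ (k + 1) = ‖(N : ℂ) ^ (k + 1)‖ := by
          rw [norm_pow]; norm_num
      _ = ‖∑ l ∈ Finset.univ.erase (0 : ZMod p), (S A l) ^ k * (starRingEnd ℂ) (S A (x * l))‖ := by
          rw [this, norm_neg]
      _ ≤ ∑ l ∈ Finset.univ.erase (0 : ZMod p), ‖(S A l) ^ k * (starRingEnd ℂ) (S A (x * l))‖ :=
          norm_sum_le _ _
      _ = ∑ l ∈ Finset.univ.erase (0 : ZMod p), ‖S A l‖ ^ k * ‖S A (x * l)‖ := by
          refine Finset.sum_congr rfl fun l _ => ?_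
          rw [norm_mul, norm_pow, RCLike.norm_conj]
  -- pointwise bounds
  have hSsq : ∀ l : ZMod p, l ≠ 0 → ‖S A l‖ ^ 2 ≤ (p : ℝ) - N := by
    intro l hl
    have := sq_S_le hp ⟨h0, h1, hmul, hinv⟩ hl
    nlinarith
  have hSsqrt : ∀ l : ZMod p, l ≠ 0 → ‖S A l‖ ≤ Real.sqrt p := by
    intro l hl
    have h2 : ‖S A l‖ ^ 2 ≤ (p : ℝ) := le_trans (hSsq l hl) (by linarith)
    nlinarith [Real.sq_sqrt hppos.le, Real.sqrt_nonneg (p : ℝ), norm_nonneg (S A l)]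
  have hterm : ∀ l : ZMod p, l ≠ 0 →
      ‖S A l‖ ^ k * ‖S A (x * l)‖
        ≤ Real.sqrt p ^ (k - 1) * ((‖S A l‖ ^ 2 + ‖S A (x * l)‖ ^ 2) / 2) := by
    intro l hl
    have h1' : ‖S A l‖ ^ k = ‖S A l‖ ^ (k - 1) * ‖S A l‖ := by
      rw [← pow_succ, Nat.sub_add_cancel hk]
    have h2' : ‖S A l‖ ^ (k - 1) ≤ Real.sqrt p ^ (k - 1) :=
      pow_le_pow_left₀ (norm_nonneg _) (hSsqrt l hl) _
    have h3' : ‖S A l‖ * ‖S A (x * l)‖ ≤ (‖S A l‖ ^ 2 + ‖S A (x * l)‖ ^ 2) / 2 := by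
      nlinarith [sq_nonneg (‖S A l‖ - ‖S A (x * l)‖)]
    calc ‖S A l‖ ^ k * ‖S A (x * l)‖
        = ‖S A l‖ ^ (k - 1) * (‖S A l‖ * ‖S A (x * l)‖) := by rw [h1']; ring
      _ ≤ Real.sqrt p ^ (k - 1) * ((‖S A l‖ ^ 2 + ‖S A (x * l)‖ ^ 2) / 2) := by
          refine mul_le_mul h2' h3' (by positivity) (by positivity)
  -- sums of squares over nonzero l
  have hsum1 : ∑ l ∈ Finset.univ.erase (0 : ZMod p), ‖S A l‖ ^ 2
      = (p : ℝ) * N - (N : ℝ) ^ 2 := by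
    rw [Finset.sum_erase_eq_sub (Finset.mem_univ 0), parseval, S_zero]
    norm_num
    rfl
  have hsum2 : ∑ l ∈ Finset.univ.erase (0 : ZMod p), ‖S A (x * l)‖ ^ 2
      = (p : ℝ) * N - (N : ℝ) ^ 2 := by
    rw [← hsum1]
    refine Finset.sum_nbij' (fun l => x * l) (fun m => x⁻¹ * m) ?_ ?_ ?_ ?_ ?_
    · intro l hl
      refine Finset.mem_erase.2 ⟨mul_ne_zero hx (Finset.mem_erase.1 hl).1, Finset.mem_univ _⟩
    · intro m hm
      refine Finset.mem_erase.2 ⟨mul_ne_zero (inv_ne_zero hx) (Finset.mem_erase.1 hm).1,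
        Finset.mem_univ _⟩
    · intro l hl; field_simp
    · intro m hm; field_simp
    · intro l hl; rfl
  -- combine
  have hfinal : ((N : ℝ)) ^ (k + 1) ≤ Real.sqrt p ^ (k - 1) * ((p : ℝ) * N - (N : ℝ) ^ 2) := by
    calc ((N : ℝ)) ^ (k + 1)
        ≤ ∑ l ∈ Finset.univ.erase (0 : ZMod p), ‖S A l‖ ^ k * ‖S A (x * l)‖ := hmain
      _ ≤ ∑ l ∈ Finset.univ.erase (0 : ZMod p),
            Real.sqrt p ^ (k - 1) * ((‖S A l‖ ^ 2 + ‖S A (x * l)‖ ^ 2) / 2) := by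
          refine Finset.sum_le_sum fun l hl => hterm l (Finset.mem_erase.1 hl).1
      _ = Real.sqrt p ^ (k - 1) * ((p : ℝ) * N - (N : ℝ) ^ 2) := by
          rw [← Finset.mul_sum]
          congr 1
          rw [← Finset.sum_div, Finset.sum_add_distrib, hsum1, hsum2]
          ring
  -- final numeric contradiction
  have hsqpos : (0:ℝ) < Real.sqrt p := Real.sqrt_pos.mpr hppos
  have hstep : ((N:ℝ)) ^ k * N < Real.sqrt p ^ (k + 1) * N := by
    have h1 : Real.sqrt p ^ (k - 1) * ((p:ℝ) * N - (N:ℝ) ^ 2)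
        < Real.sqrt p ^ (k - 1) * ((p:ℝ) * N) := by
      refine mul_lt_mul_of_pos_left ?_ (pow_pos hsqpos _)
      nlinarith
    have h2 : Real.sqrt p ^ (k - 1) * ((p:ℝ) * N) = Real.sqrt p ^ (k + 1) * N := by
      have hs : Real.sqrt p ^ 2 = (p:ℝ) := Real.sq_sqrt hppos.le
      have hkk : k - 1 + 2 = k + 1 := by omega
      rw [show (p:ℝ) * N = Real.sqrt p ^ 2 * N by rw [hs], ← mul_assoc, ← pow_add, hkk]
    have h3 : ((N:ℝ)) ^ k * N = ((N:ℝ)) ^ (k + 1) := by ring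
    rw [h3]
    calc ((N:ℝ)) ^ (k + 1) ≤ Real.sqrt p ^ (k - 1) * ((p:ℝ) * N - (N:ℝ) ^ 2) := hfinal
      _ < Real.sqrt p ^ (k - 1) * ((p:ℝ) * N) := h1
      _ = Real.sqrt p ^ (k + 1) * N := h2
  have hNk : ((N:ℝ)) ^ k < Real.sqrt p ^ (k + 1) :=
    lt_of_mul_lt_mul_right hstep hNpos.le
  have hexp : ((p:ℝ) ^ ((1:ℝ)/2 + 1/(2*(k:ℝ)))) ^ k = Real.sqrt p ^ (k + 1) := by
    rw [Real.sqrt_eq_rpow, ← Real.rpow_natCast ((p:ℝ) ^ ((1:ℝ)/2 + 1/(2*(k:ℝ)))) k,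
        ← Real.rpow_natCast ((p:ℝ) ^ ((1:ℝ)/2)) (k+1), ← Real.rpow_mul hppos.le,
        ← Real.rpow_mul hppos.le]
    congr 1
    have hk0 : (k:ℝ) ≠ 0 := Nat.cast_ne_zero.mpr (by omega)
    push_cast
    field_simp
  have hlt : Real.sqrt p ^ (k + 1) < ((N:ℝ)) ^ k := by
    rw [← hexp]
    exact pow_lt_pow_left₀ hlarge (Real.rpow_nonneg hppos.le _) (by omega)
  linarith
end

section
/- For a finite subset A of an abelian group, Σ_s |A_s|^2 / |A + A_s| ≪ |A|^{-2} E_3(A), where A_s = A ∩ (A+s), E_3(A) = Σ_s |A_s|^3, and the sum is over all s with A_s nonempty. -/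
open Finset Pointwise

private lemma mem_inter_image_iff {G : Type} [AddCommGroup G] [DecidableEq G]
    (A : Finset G) (s x : G) :
    x ∈ A ∩ A.image (· + s) ↔ x ∈ A ∧ x - s ∈ A := by
  simp only [mem_inter, mem_image]
  constructor
  · rintro ⟨hx, y, hy, rfl⟩; simpa using ⟨hx, hy⟩
  · rintro ⟨hx, hy⟩; exact ⟨hx, x - s, hy, by abel⟩

private lemma keyA {G : Type} [AddCommGroup G] [DecidableEq G] (A : Finset G) (s : G) :
    ((A ∩ A.image (· + s)).card : ℝ) ^ 2 / ((A + A ∩ A.image (· + s)).card : ℝ) ≤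
      (Finset.addEnergy A (A ∩ A.image (· + s)) : ℝ) / (A.card : ℝ) ^ 2 := by
  set B := A ∩ A.image (· + s) with hB
  have key : A.card ^ 2 * B.card ^ 2 ≤ (A + B).card * Finset.addEnergy A B :=
    Finset.le_card_add_mul_addEnergy A B
  rcases eq_or_ne B.card 0 with hB0 | hB0
  · rw [hB0]
    simp only [Nat.cast_zero]
    rw [zero_pow (by norm_num), zero_div]
    positivity
  have hBne : B.Nonempty := card_pos.mp (Nat.pos_of_ne_zero hB0)
  have hAne : A.Nonempty := by
    obtain ⟨x, hx⟩ := hBne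
    exact ⟨x, (mem_inter.mp hx).1⟩
  have hABpos : (0:ℝ) < ((A + B).card : ℝ) := by
    exact_mod_cast card_pos.mpr (hAne.add hBne)
  have hApos : (0:ℝ) < ((A.card : ℝ)) ^ 2 := by
    have := card_pos.mpr hAne
    positivity
  rw [div_le_div_iff₀ hABpos hApos]
  have : ((A.card ^ 2 * B.card ^ 2 : ℕ) : ℝ) ≤
      (((A + B).card * Finset.addEnergy A B : ℕ) : ℝ) := by exact_mod_cast key
  push_cast at this
  nlinarith [this]

private lemma keyB {G : Type} [AddCommGroup G] [DecidableEq G] (A : Finset G) :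
    ∑ s ∈ A - A, Finset.addEnergy A (A ∩ A.image (· + s)) ≤
      ∑ t ∈ A - A, (A ∩ A.image (· + t)).card ^ 3 := by
  classical
  have h1 : ∀ s : G, Finset.addEnergy A (A ∩ A.image (· + s)) =
      (((A ×ˢ A) ×ˢ (A ∩ A.image (· + s)) ×ˢ (A ∩ A.image (· + s))).filter
        fun x : (G × G) × G × G => x.1.1 + x.2.1 = x.1.2 + x.2.2).card := fun s => rfl
  have h2 : ∀ t : G, (A ∩ A.image (· + t)).card ^ 3 =
      ((A ∩ A.image (· + t)) ×ˢ (A ∩ A.image (· + t)) ×ˢ (A ∩ A.image (· + t))).card := by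
    intro t; simp [card_product]; ring
  simp_rw [h1, h2, ← card_sigma]
  apply card_le_card_of_injOn
    (fun p => ⟨p.2.1.1 - p.2.1.2, (p.2.1.1, p.2.2.2, p.2.2.2 - p.1)⟩)
  · rintro ⟨s, ⟨⟨a₁, a₂⟩, ⟨b₁, b₂⟩⟩⟩ hp
    simp only [mem_coe, mem_sigma, mem_filter, mem_product] at hp
    obtain ⟨hs, ⟨⟨ha₁, ha₂⟩, hb₁, hb₂⟩, heq⟩ := hp
    rw [mem_inter_image_iff] at hb₁ hb₂
    simp only [mem_sigma, mem_product, mem_coe]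
    refine ⟨sub_mem_sub ha₁ ha₂, ?_, ?_, ?_⟩
    · rw [mem_inter_image_iff]
      constructor
      · exact ha₁
      · have : a₁ - (a₁ - a₂) = a₂ := by abel
        rw [this]; exact ha₂
    · rw [mem_inter_image_iff]
      refine ⟨hb₂.1, ?_⟩
      have h : b₂ - (a₁ - a₂) - b₁ = a₂ + b₂ - (a₁ + b₁) := by abel
      rw [heq, sub_self] at h
      rw [sub_eq_zero.mp h]; exact hb₁.1
    · rw [mem_inter_image_iff]
      refine ⟨hb₂.2, ?_⟩
      have h : b₂ - s - (a₁ - a₂) - (b₁ - s) = a₂ + b₂ - (a₁ + b₁) := by abel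
      rw [heq, sub_self] at h
      rw [sub_eq_zero.mp h]; exact hb₁.2
  · rintro ⟨s, ⟨⟨a₁, a₂⟩, ⟨b₁, b₂⟩⟩⟩ hp ⟨s', ⟨⟨a₁', a₂'⟩, ⟨b₁', b₂'⟩⟩⟩ hp' heq
    simp only [mem_coe, mem_sigma, mem_filter, mem_product] at hp hp'
    obtain ⟨_, _, heq1⟩ := hp
    obtain ⟨_, _, heq1'⟩ := hp'
    simp only [Sigma.mk.inj_iff, Prod.mk.injEq, heq_eq_eq] at heq
    obtain ⟨ht, ha, hb, hz⟩ := heq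
    subst ha; subst hb
    have hs : s = s' := sub_right_injective hz
    subst hs
    have ha2 : a₂ = a₂' := sub_right_injective ht
    subst ha2
    have hb1 : b₁ = b₁' := add_left_cancel (heq1.trans heq1'.symm)
    subst hb1
    rfl

theorem stmt2 :
    ∃ C : ℝ, 0 < C ∧
      ∀ (G : Type) [AddCommGroup G] [DecidableEq G] (A : Finset G),
        ∑ s ∈ A - A,
            ((A ∩ A.image (· + s)).card : ℝ) ^ 2 / ((A + A ∩ A.image (· + s)).card : ℝ)
          ≤ C / ((A.card : ℝ) ^ 2) *
              ∑ s ∈ A - A, ((A ∩ A.image (· + s)).card : ℝ) ^ 3 := by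
  refine ⟨1, one_pos, ?_⟩
  intro G _ _ A
  rcases A.eq_empty_or_nonempty with rfl | hA
  · simp
  have hApos : (0:ℝ) < (A.card : ℝ) ^ 2 := by
    have := card_pos.mpr hA; positivity
  have hsum : (∑ s ∈ A - A, (Finset.addEnergy A (A ∩ A.image (· + s)) : ℝ)) ≤
      ∑ t ∈ A - A, ((A ∩ A.image (· + t)).card : ℝ) ^ 3 := by
    have := keyB A
    push_cast
    exact_mod_cast this
  calc
    ∑ s ∈ A - A,
        ((A ∩ A.image (· + s)).card : ℝ) ^ 2 / ((A + A ∩ A.image (· + s)).card : ℝ)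
      ≤ ∑ s ∈ A - A, (Finset.addEnergy A (A ∩ A.image (· + s)) : ℝ) / (A.card : ℝ) ^ 2 :=
        sum_le_sum fun s _ => keyA A s
    _ = (∑ s ∈ A - A, (Finset.addEnergy A (A ∩ A.image (· + s)) : ℝ)) / (A.card : ℝ) ^ 2 := by
        rw [sum_div]
    _ ≤ (∑ t ∈ A - A, ((A ∩ A.image (· + t)).card : ℝ) ^ 3) / (A.card : ℝ) ^ 2 := by
        gcongr
    _ = 1 / (A.card : ℝ) ^ 2 * ∑ s ∈ A - A, ((A ∩ A.image (· + s)).card : ℝ) ^ 3 := by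
        ring
end

section
/- Let A ⊆ Z_p with |A| finite and 2A its sumset. If |2A| |A|^3 > p Φ_A^3, where Φ_A = max_{λ≠0} |Σ_{x∈A} e_p(λx)|, then for every a ∈ Z_p^* the equation x_1 + x_2 + y_1 + y_2 = a·y_3 has a solution with x_1, x_2 ∈ 2A and y_1, y_2, y_3 ∈ A. -/
open Finset Pointwise

noncomputable def ep (p : ℕ) (x : ZMod p) : ℂ :=
  Complex.exp (2 * Real.pi * Complex.I * (x.val : ℂ) / (p : ℂ))

section helpers
variable {p : ℕ} [hpf : Fact p.Prime]

lemma exp_nat_mod (m : ℕ) :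
    Complex.exp (2 * Real.pi * Complex.I * (m : ℂ) / p)
      = Complex.exp (2 * Real.pi * Complex.I * ((m % p : ℕ) : ℂ) / p) := by
  have hp : (p : ℂ) ≠ 0 := Nat.cast_ne_zero.2 hpf.out.ne_zero
  have h : (2 * Real.pi * Complex.I * (m : ℂ) / p)
      = 2 * Real.pi * Complex.I * ((m % p : ℕ) : ℂ) / p
        + ((m / p : ℕ) : ℤ) * (2 * Real.pi * Complex.I) := by
    have hm : (m : ℂ) = ((m % p : ℕ) : ℂ) + ((m / p : ℕ) : ℂ) * p := by
      have hm0 : m % p + m / p * p = m := Nat.mod_add_div' m p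
      rw [← Nat.cast_mul, ← Nat.cast_add, hm0]
    rw [hm]
    rw [Int.cast_natCast]
    field_simp
  rw [h, Complex.exp_add, Complex.exp_int_mul_two_pi_mul_I, mul_one]

lemma ep_nat (m : ℕ) :
    ep p (m : ZMod p) = Complex.exp (2 * Real.pi * Complex.I * (m : ℂ) / p) := by
  rw [ep, ZMod.val_natCast]
  exact (exp_nat_mod m).symm

lemma ep_add (x y : ZMod p) : ep p (x + y) = ep p x * ep p y := by
  have hx : x + y = ((x.val + y.val : ℕ) : ZMod p) := by
    push_cast [ZMod.natCast_zmod_val]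
    rfl
  rw [hx, ep_nat, ep, ep, ← Complex.exp_add]
  congr 1
  push_cast
  ring

lemma ep_zero : ep p (0 : ZMod p) = 1 := by
  simp [ep]

lemma ep_norm (x : ZMod p) : ‖ep p x‖ = 1 := by
  have h : (2 * Real.pi * Complex.I * (x.val : ℂ) / p)
      = ((2 * Real.pi * x.val / p : ℝ) : ℂ) * Complex.I := by
    push_cast; ring
  rw [ep, h]
  exact Complex.norm_exp_ofReal_mul_I _

lemma ep_ne_zero (x : ZMod p) : ep p x ≠ 0 := Complex.exp_ne_zero _

lemma ep_neg (x : ZMod p) : ep p (-x) = (ep p x)⁻¹ := by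
  refine eq_inv_of_mul_eq_one_left ?_
  rw [← ep_add, neg_add_cancel, ep_zero]

lemma ep_conj (x : ZMod p) : (starRingEnd ℂ) (ep p x) = ep p (-x) := by
  have h1 : ep p x * (starRingEnd ℂ) (ep p x) = 1 := by
    rw [Complex.mul_conj, Complex.normSq_eq_norm_sq]
    norm_cast
    rw [ep_norm]
    norm_num
  rw [ep_neg]
  field_simp [ep_ne_zero x] at h1 ⊢
  linear_combination h1

lemma ep_ne_one {t : ZMod p} (ht : t ≠ 0) : ep p t ≠ 1 := by
  intro h
  rw [ep, Complex.exp_eq_one_iff] at h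
  obtain ⟨n, hn⟩ := h
  have hp : (p : ℂ) ≠ 0 := Nat.cast_ne_zero.2 hpf.out.ne_zero
  have hπ : (2 * (Real.pi : ℂ) * Complex.I) ≠ 0 := by
    simp [Real.pi_ne_zero, Complex.I_ne_zero]
  have h3 : (2 * (Real.pi : ℂ) * Complex.I) * (t.val : ℂ)
      = (2 * (Real.pi : ℂ) * Complex.I) * ((n : ℂ) * p) := by
    have := (div_eq_iff hp).mp hn
    linear_combination this
  have h4 : (t.val : ℂ) = ((n * p : ℤ) : ℂ) := by
    have := mul_left_cancel₀ hπ h3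
    push_cast
    exact this
  have h5 : (t.val : ℤ) = n * p := by exact_mod_cast h4
  have h6 : t.val < p := ZMod.val_lt t
  have h7 : t.val ≠ 0 := fun h0 => ht ((ZMod.val_eq_zero t).mp h0)
  have hp1 : 1 ≤ (p : ℤ) := by exact_mod_cast hpf.out.one_lt.le.trans' (by norm_num)
  rcases le_or_gt n 0 with h | h
  · nlinarith [h5, (show (0:ℤ) < t.val by exact_mod_cast Nat.pos_of_ne_zero h7)]
  · nlinarith [h5, (show (t.val : ℤ) < p by exact_mod_cast h6)]

lemma sum_ep (t : ZMod p) :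
    ∑ lam : ZMod p, ep p (lam * t) = if t = 0 then (p : ℂ) else 0 := by
  split_ifs with h
  · subst h
    simp [ep_zero, ZMod.card]
  · have key : ep p t * ∑ lam : ZMod p, ep p (lam * t) = ∑ lam : ZMod p, ep p (lam * t) := by
      rw [Finset.mul_sum]
      refine Fintype.sum_equiv (Equiv.addRight 1) _ _ ?_
      intro lam
      rw [← ep_add]
      congr 1
      simp [Equiv.coe_addRight]
      ring
    have h2 : (ep p t - 1) * ∑ lam : ZMod p, ep p (lam * t) = 0 := by
      rw [sub_mul, one_mul, key, sub_self]
    rcases mul_eq_zero.mp h2 with h3 | h3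
    · exact absurd (by linear_combination h3) (ep_ne_one h)
    · exact h3

end helpers

section helpers2
variable {p : ℕ} [hpf : Fact p.Prime]

lemma parseval (T : Finset (ZMod p)) :
    ∑ lam : ZMod p, ‖∑ x ∈ T, ep p (lam * x)‖ ^ 2 = (p : ℝ) * T.card := by
  have hc : ∑ lam : ZMod p,
      ((∑ x ∈ T, ep p (lam * x)) * (starRingEnd ℂ) (∑ x ∈ T, ep p (lam * x)))
      = (p : ℂ) * T.card := by
    have expand : ∀ lam : ZMod p,
        (∑ x ∈ T, ep p (lam * x)) * (starRingEnd ℂ) (∑ x ∈ T, ep p (lam * x))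
        = ∑ x ∈ T, ∑ y ∈ T, ep p (lam * (x - y)) := by
      intro lam
      rw [map_sum, Finset.sum_mul_sum]
      refine Finset.sum_congr rfl fun x _ => ?_
      refine Finset.sum_congr rfl fun y _ => ?_
      rw [ep_conj, ← ep_add]
      congr 1
      ring
    simp only [expand]
    rw [Finset.sum_comm]
    have step : ∀ x ∈ T, ∑ lam : ZMod p, ∑ y ∈ T, ep p (lam * (x - y))
        = (p : ℂ) := by
      intro x hx
      rw [Finset.sum_comm]
      have : ∀ y ∈ T, ∑ lam : ZMod p, ep p (lam * (x - y))
          = if x = y then (p : ℂ) else 0 := by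
        intro y _
        rw [sum_ep]
        congr 1
        simp [sub_eq_zero, eq_comm]
      rw [Finset.sum_congr rfl this, Finset.sum_ite_eq T x (fun _ => (p : ℂ)), if_pos hx]
    rw [Finset.sum_congr rfl step, Finset.sum_const, nsmul_eq_mul, mul_comm]
  have hre : ∀ z : ℂ, z * (starRingEnd ℂ) z = ((‖z‖ ^ 2 : ℝ) : ℂ) := by
    intro z
    rw [Complex.mul_conj, Complex.normSq_eq_norm_sq]
  simp only [hre] at hc
  exact_mod_cast hc

end helpers2

theorem stmt11 (p : ℕ) (hp : p.Prime) (A : Finset (ZMod p)) (Φ : ℝ)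
    (hΦ : ∀ lam : ZMod p, lam ≠ 0 → ‖∑ x ∈ A, ep p (lam * x)‖ ≤ Φ)
    (hbig : (p : ℝ) * Φ ^ 3 < ((A + A).card : ℝ) * (A.card : ℝ) ^ 3) :
    ∀ a : ZMod p, a ≠ 0 →
      ∃ x₁ ∈ A + A, ∃ x₂ ∈ A + A, ∃ y₁ ∈ A, ∃ y₂ ∈ A, ∃ y₃ ∈ A,
        x₁ + x₂ + y₁ + y₂ = a * y₃ := by
  haveI : Fact p.Prime := ⟨hp⟩
  intro a ha
  by_contra hcon
  push_neg at hcon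
  set S : ZMod p → ℂ := fun lam => ∑ x ∈ A + A, ep p (lam * x) with hSdef
  set T : ZMod p → ℂ := fun lam => ∑ y ∈ A, ep p (lam * y) with hTdef
  set B : ZMod p → ℂ := fun lam => ∑ y ∈ A, ep p (-(a * lam) * y) with hBdef
  have hΦ0 : 0 ≤ Φ := le_trans (norm_nonneg _) (hΦ 1 one_ne_zero)
  have key : ∑ lam : ZMod p, S lam * S lam * T lam * T lam * B lam = 0 := by
    have expand : ∀ lam : ZMod p, S lam * S lam * T lam * T lam * B lam
        = ∑ y₃ ∈ A, ∑ y₂ ∈ A, ∑ y₁ ∈ A, ∑ x₂ ∈ A + A, ∑ x₁ ∈ A + A,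
            ep p (lam * (x₁ + x₂ + y₁ + y₂ - a * y₃)) := by
      intro lam
      rw [hSdef, hTdef, hBdef]
      simp only [Finset.sum_mul, Finset.mul_sum]
      refine Finset.sum_congr rfl fun y₃ _ => ?_
      refine Finset.sum_congr rfl fun y₂ _ => ?_
      refine Finset.sum_congr rfl fun y₁ _ => ?_
      refine Finset.sum_congr rfl fun x₂ _ => ?_
      refine Finset.sum_congr rfl fun x₁ _ => ?_
      simp only [← ep_add]
      congr 1
      ring
    rw [Finset.sum_congr rfl fun lam _ => expand lam]
    rw [Finset.sum_comm]
    refine Finset.sum_eq_zero fun y₃ hy₃ => ?_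
    rw [Finset.sum_comm]
    refine Finset.sum_eq_zero fun y₂ hy₂ => ?_
    rw [Finset.sum_comm]
    refine Finset.sum_eq_zero fun y₁ hy₁ => ?_
    rw [Finset.sum_comm]
    refine Finset.sum_eq_zero fun x₂ hx₂ => ?_
    rw [Finset.sum_comm]
    refine Finset.sum_eq_zero fun x₁ hx₁ => ?_
    rw [sum_ep, if_neg]
    intro h
    exact hcon x₁ hx₁ x₂ hx₂ y₁ hy₁ y₂ hy₂ y₃ hy₃ (sub_eq_zero.mp h)
  have hS0 : S 0 = ((A + A).card : ℂ) := by
    simp [hSdef, ep_zero]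
  have hT0 : T 0 = (A.card : ℂ) := by
    simp [hTdef, ep_zero]
  have hB0 : B 0 = (A.card : ℂ) := by
    simp [hBdef, ep_zero]
  have hsplit : ∑ lam ∈ Finset.univ.erase (0 : ZMod p),
      S lam * S lam * T lam * T lam * B lam
      = -(S 0 * S 0 * T 0 * T 0 * B 0) := by
    have := Finset.add_sum_erase Finset.univ
      (fun lam => S lam * S lam * T lam * T lam * B lam) (Finset.mem_univ (0 : ZMod p))
    rw [key] at this
    linear_combination this
  have hF0norm : ‖S 0 * S 0 * T 0 * T 0 * B 0‖
      = ((A + A).card : ℝ) * (A + A).card * A.card * A.card * A.card := by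
    rw [hS0, hT0, hB0]
    simp [norm_mul]
  have hsum : ∑ lam : ZMod p, ‖S lam‖ ^ 2 = (p : ℝ) * (A + A).card := by
    simp only [hSdef]
    exact parseval (A + A)
  have hmain : ((A + A).card : ℝ) * (A + A).card * A.card * A.card * A.card
      ≤ Φ ^ 3 * ((p : ℝ) * (A + A).card) := by
    have h1 : ((A + A).card : ℝ) * (A + A).card * A.card * A.card * A.card
        = ‖∑ lam ∈ Finset.univ.erase (0 : ZMod p),
            S lam * S lam * T lam * T lam * B lam‖ := by
      rw [hsplit, norm_neg, hF0norm]
    rw [h1]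
    calc ‖∑ lam ∈ Finset.univ.erase (0 : ZMod p), S lam * S lam * T lam * T lam * B lam‖
        ≤ ∑ lam ∈ Finset.univ.erase (0 : ZMod p), ‖S lam * S lam * T lam * T lam * B lam‖ :=
          norm_sum_le _ _
      _ ≤ ∑ lam ∈ Finset.univ.erase (0 : ZMod p), Φ ^ 3 * ‖S lam‖ ^ 2 := by
          refine Finset.sum_le_sum fun lam hlam => ?_
          have hlam0 : lam ≠ 0 := (Finset.mem_erase.mp hlam).1
          have h2 : ‖T lam‖ ≤ Φ := hΦ lam hlam0
          have h3 : ‖B lam‖ ≤ Φ := hΦ (-(a * lam)) (neg_ne_zero.mpr (mul_ne_zero ha hlam0))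
          calc ‖S lam * S lam * T lam * T lam * B lam‖
              = ‖S lam‖ * ‖S lam‖ * ‖T lam‖ * ‖T lam‖ * ‖B lam‖ := by simp [norm_mul]
            _ ≤ ‖S lam‖ * ‖S lam‖ * Φ * Φ * Φ := by
                gcongr
            _ = Φ ^ 3 * ‖S lam‖ ^ 2 := by ring
      _ = Φ ^ 3 * ∑ lam ∈ Finset.univ.erase (0 : ZMod p), ‖S lam‖ ^ 2 := by
          rw [Finset.mul_sum]
      _ ≤ Φ ^ 3 * ∑ lam : ZMod p, ‖S lam‖ ^ 2 := by
          refine mul_le_mul_of_nonneg_left ?_ (by positivity)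
          exact Finset.sum_le_sum_of_subset_of_nonneg (Finset.erase_subset _ _)
            (fun _ _ _ => by positivity)
      _ = Φ ^ 3 * ((p : ℝ) * (A + A).card) := by rw [hsum]
  have hc2a : (0 : ℝ) < (A + A).card := by
    rcases lt_or_ge (0 : ℝ) ((A + A).card : ℝ) with h | h
    · exact h
    · exfalso
      have h0 : ((A + A).card : ℝ) = 0 := le_antisymm h (by positivity)
      rw [h0] at hbig
      have hp0 : (0 : ℝ) ≤ (p : ℝ) := Nat.cast_nonneg p
      nlinarith [pow_nonneg hΦ0 3]
  nlinarith [mul_lt_mul_of_pos_right hbig hc2a, hmain]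
end
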